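/- Regret bound (on-policy form): Let π₂ be the optimal policy for entropy-regularized RL under reward r, π₁ any policy, α = max_s D_TV(π₁(·|s), π₂(·|s)), ε = max_{s,a}|A_{π₂}(s,a)|, and ΔA(s) = E_{a∼π₁}[A_{π₂}(s,a)] − E_{a∼π₂}[A_{π₂}(s,a)]. Then |U_r(π₁) − U_r(π₂) − Σ_{t≥0} γ^t E_{s_t∼π₁}[ΔA(s_t)]| ≤ 2αγε/(1−γ)². -/

import Mathlib

open Finset

lemma wsum_abs_le {ι : Type*} [Fintype ι] (w u : ι → ℝ) (C : ℝ)
    (hw : ∀ i, 0 ≤ w i) (hw1 : ∑ i, w i = 1) (hu : ∀ i, |u i| ≤ C) :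
    |∑ i, w i * u i| ≤ C := by
  calc |∑ i, w i * u i| ≤ ∑ i, |w i * u i| := Finset.abs_sum_le_sum_abs _ _
    _ ≤ ∑ i, w i * C := Finset.sum_le_sum fun i _ => by
        rw [abs_mul, abs_of_nonneg (hw i)]
        exact mul_le_mul_of_nonneg_left (hu i) (hw i)
    _ = C := by rw [← Finset.sum_mul, hw1, one_mul]

lemma tsum_telescope_eq (f : ℕ → ℝ) (hf : Summable f) :
    ∑' t : ℕ, (f t - f (t + 1)) = f 0 := by
  have h1 : Summable fun t => f (t + 1) := (summable_nat_add_iff 1).2 hf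
  rw [Summable.tsum_sub hf h1]
  have h2 := Summable.tsum_eq_zero_add hf
  linarith

/-- On-policy regret bound: for `π₂` optimal under entropy-regularized RL with reward `r`,
    `|U_r(π₁) − U_r(π₂) − Σ_t γ^t E_{s_t∼π₁}[ΔA(s_t)]| ≤ 2αγε/(1−γ)²`. -/
theorem regret_bound_on_policy {S A : Type*} [Fintype S] [Nonempty S] [Fintype A] [Nonempty A]
    (γ : ℝ) (hγ0 : 0 ≤ γ) (hγ1 : γ < 1)
    (r : S → A → ℝ) (d0 : S → ℝ) (Ptr : S → A → S → ℝ)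
    (hd0 : (∀ s, 0 ≤ d0 s) ∧ ∑ s, d0 s = 1)
    (hPtr : ∀ s a, (∀ s', 0 ≤ Ptr s a s') ∧ ∑ s', Ptr s a s' = 1)
    (π₁ π₂ : S → A → ℝ)
    (hπ₁ : ∀ s, (∀ a, 0 ≤ π₁ s a) ∧ ∑ a, π₁ s a = 1)
    (hπ₂ : ∀ s, (∀ a, 0 ≤ π₂ s a) ∧ ∑ a, π₂ s a = 1)
    (d : (S → A → ℝ) → ℕ → S → ℝ)
    (hdzero : ∀ π, d π 0 = d0)
    (hdsucc : ∀ π t s', d π (t + 1) s' = ∑ s, ∑ a, d π t s * π s a * Ptr s a s')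
    (Hloc : (S → A → ℝ) → S → ℝ)
    (hHloc : ∀ π s, Hloc π s = ∑ a, -(π s a * Real.log (π s a)))
    -- soft value functions of π₂
    (Q : S → A → ℝ) (V : S → ℝ)
    (hQ : ∀ s a, Q s a = r s a + γ * ∑ s', Ptr s a s' * V s')
    (hV : ∀ s, V s = (∑ a, π₂ s a * Q s a) + Hloc π₂ s)
    -- π₂ is optimal for entropy-regularized RL under r
    (hopt : ∀ π : S → A → ℝ, (∀ s, (∀ a, 0 ≤ π s a) ∧ ∑ a, π s a = 1) →
        (∑' t : ℕ, γ ^ t * ∑ s, ∑ a, d π t s * π s a * r s a)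
          + (∑' t : ℕ, γ ^ t * ∑ s, d π t s * Hloc π s)
        ≤ (∑' t : ℕ, γ ^ t * ∑ s, ∑ a, d π₂ t s * π₂ s a * r s a)
          + (∑' t : ℕ, γ ^ t * ∑ s, d π₂ t s * Hloc π₂ s))
    -- α : maximal total-variation distance between π₁ and π₂; ε : maximal |A_{π₂}|
    (α ε : ℝ)
    (hα : α = univ.sup' univ_nonempty (fun s => (∑ a, |π₁ s a - π₂ s a|) / 2))
    (hε : ε = univ.sup' univ_nonempty
        (fun s => univ.sup' univ_nonempty (fun a => |Q s a - V s|))) :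
    |((∑' t : ℕ, γ ^ t * ∑ s, ∑ a, d π₁ t s * π₁ s a * r s a)
        - (∑' t : ℕ, γ ^ t * ∑ s, ∑ a, d π₂ t s * π₂ s a * r s a))
      - (∑' t : ℕ, γ ^ t * ∑ s, d π₁ t s *
          (∑ a, (π₁ s a - π₂ s a) * (Q s a - V s)))|
      ≤ 2 * α * γ * ε / (1 - γ) ^ 2 := by
  clear hHloc hV hopt
  -- basic facts about the state distributions
  have hd' : ∀ π, (∀ s, (∀ a, 0 ≤ π s a) ∧ ∑ a, π s a = 1) →
      ∀ t, (∀ s, 0 ≤ d π t s) ∧ ∑ s, d π t s = 1 := by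
    intro π hπ t
    induction t with
    | zero => rw [hdzero]; exact ⟨hd0.1, hd0.2⟩
    | succ t ih =>
      constructor
      · intro s'
        rw [hdsucc]
        refine Finset.sum_nonneg fun s _ => Finset.sum_nonneg fun a _ => ?_
        exact mul_nonneg (mul_nonneg (ih.1 s) ((hπ s).1 a)) ((hPtr s a).1 s')
      · simp only [hdsucc]
        rw [Finset.sum_comm]
        calc ∑ s, ∑ s', ∑ a, d π t s * π s a * Ptr s a s'
            = ∑ s, ∑ a, ∑ s', d π t s * π s a * Ptr s a s' :=
              Finset.sum_congr rfl fun s _ => Finset.sum_comm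
          _ = ∑ s, ∑ a, d π t s * π s a := by
              refine Finset.sum_congr rfl fun s _ => Finset.sum_congr rfl fun a _ => ?_
              rw [← Finset.mul_sum, (hPtr s a).2, mul_one]
          _ = ∑ s, d π t s := by
              refine Finset.sum_congr rfl fun s _ => ?_
              rw [← Finset.mul_sum, (hπ s).2, mul_one]
          _ = 1 := ih.2
  -- bounds coming from α and ε
  have hεQ : ∀ s a, |Q s a - V s| ≤ ε := fun s a => hε ▸
    le_trans (Finset.le_sup' (fun a => |Q s a - V s|) (mem_univ a))
      (Finset.le_sup' (fun s => univ.sup' univ_nonempty (fun a => |Q s a - V s|)) (mem_univ s))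
  have hε0 : 0 ≤ ε := le_trans (abs_nonneg _) (hεQ Classical.ofNonempty Classical.ofNonempty)
  have hαs : ∀ s, ∑ a, |π₁ s a - π₂ s a| ≤ 2 * α := by
    intro s
    have := hα ▸ Finset.le_sup' (fun s => (∑ a, |π₁ s a - π₂ s a|) / 2) (mem_univ s)
    linarith
  have hα0 : 0 ≤ α := by
    have h1 : (0:ℝ) ≤ ∑ a, |π₁ Classical.ofNonempty a - π₂ Classical.ofNonempty a| :=
      Finset.sum_nonneg fun a _ => abs_nonneg _
    have := hαs Classical.ofNonempty
    linarith
  -- splitting the advantage difference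
  have hsplit : ∀ s, (∑ a, (π₁ s a - π₂ s a) * (Q s a - V s))
      = (∑ a, π₁ s a * (Q s a - V s)) - ∑ a, π₂ s a * (Q s a - V s) := by
    intro s
    rw [← Finset.sum_sub_distrib]
    exact Finset.sum_congr rfl fun a _ => by ring
  have hh1ε : ∀ s, |∑ a, π₁ s a * (Q s a - V s)| ≤ ε := fun s =>
    wsum_abs_le _ _ _ (hπ₁ s).1 (hπ₁ s).2 (fun a => hεQ s a)
  have hh2ε : ∀ s, |∑ a, π₂ s a * (Q s a - V s)| ≤ ε := fun s =>
    wsum_abs_le _ _ _ (hπ₂ s).1 (hπ₂ s).2 (fun a => hεQ s a)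
  -- TV distance of state distributions grows at most linearly
  have hΔ : ∀ t : ℕ, ∑ s, |d π₁ t s - d π₂ t s| ≤ 2 * t * α := by
    intro t
    induction t with
    | zero => simp [hdzero]
    | succ t ih =>
      have key : ∀ s a, |d π₁ t s * π₁ s a - d π₂ t s * π₂ s a|
          ≤ |d π₁ t s - d π₂ t s| * π₁ s a + d π₂ t s * |π₁ s a - π₂ s a| := by
        intro s a
        have e : d π₁ t s * π₁ s a - d π₂ t s * π₂ s a
            = (d π₁ t s - d π₂ t s) * π₁ s a + d π₂ t s * (π₁ s a - π₂ s a) := by ring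
        rw [e]
        refine (abs_add_le _ _).trans (le_of_eq ?_)
        rw [abs_mul, abs_mul, abs_of_nonneg ((hπ₁ s).1 a),
          abs_of_nonneg ((hd' π₂ hπ₂ t).1 s)]
      calc ∑ s', |d π₁ (t+1) s' - d π₂ (t+1) s'|
          = ∑ s', |∑ s, ∑ a, (d π₁ t s * π₁ s a - d π₂ t s * π₂ s a) * Ptr s a s'| := by
            refine Finset.sum_congr rfl fun s' _ => ?_
            rw [hdsucc, hdsucc, ← Finset.sum_sub_distrib]
            congr 1
            refine Finset.sum_congr rfl fun s _ => ?_
            rw [← Finset.sum_sub_distrib]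
            exact Finset.sum_congr rfl fun a _ => by ring
        _ ≤ ∑ s', ∑ s, ∑ a, |d π₁ t s * π₁ s a - d π₂ t s * π₂ s a| * Ptr s a s' := by
            refine Finset.sum_le_sum fun s' _ => ?_
            refine (Finset.abs_sum_le_sum_abs _ _).trans (Finset.sum_le_sum fun s _ => ?_)
            refine (Finset.abs_sum_le_sum_abs _ _).trans (Finset.sum_le_sum fun a _ => ?_)
            rw [abs_mul, abs_of_nonneg ((hPtr s a).1 s')]
        _ = ∑ s, ∑ a, |d π₁ t s * π₁ s a - d π₂ t s * π₂ s a| := by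
            rw [Finset.sum_comm]
            refine Finset.sum_congr rfl fun s _ => ?_
            rw [Finset.sum_comm]
            refine Finset.sum_congr rfl fun a _ => ?_
            rw [← Finset.mul_sum, (hPtr s a).2, mul_one]
        _ ≤ ∑ s, ∑ a, (|d π₁ t s - d π₂ t s| * π₁ s a + d π₂ t s * |π₁ s a - π₂ s a|) :=
            Finset.sum_le_sum fun s _ => Finset.sum_le_sum fun a _ => key s a
        _ = (∑ s, |d π₁ t s - d π₂ t s|) + ∑ s, d π₂ t s * ∑ a, |π₁ s a - π₂ s a| := by
            rw [← Finset.sum_add_distrib]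
            refine Finset.sum_congr rfl fun s _ => ?_
            rw [Finset.sum_add_distrib, ← Finset.mul_sum, ← Finset.mul_sum, (hπ₁ s).2, mul_one]
        _ ≤ 2 * t * α + ∑ s, d π₂ t s * (2 * α) := by
            refine add_le_add ih (Finset.sum_le_sum fun s _ => ?_)
            exact mul_le_mul_of_nonneg_left (hαs s) ((hd' π₂ hπ₂ t).1 s)
        _ = 2 * t * α + 2 * α := by
            rw [← Finset.sum_mul, (hd' π₂ hπ₂ t).2, one_mul]
        _ = 2 * (t + 1 : ℕ) * α := by push_cast; ring
  -- uniform bounds on the reward and value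
  obtain ⟨Cr, hCr⟩ : ∃ C : ℝ, ∀ s a, |r s a| ≤ C :=
    ⟨univ.sup' univ_nonempty (fun s => univ.sup' univ_nonempty (fun a => |r s a|)),
      fun s a => le_trans (Finset.le_sup' (fun a => |r s a|) (mem_univ a))
        (Finset.le_sup' (fun s => univ.sup' univ_nonempty (fun a => |r s a|)) (mem_univ s))⟩
  obtain ⟨CV, hCV⟩ : ∃ C : ℝ, ∀ s, |V s| ≤ C :=
    ⟨univ.sup' univ_nonempty (fun s => |V s|), fun s => Finset.le_sup' (fun s => |V s|) (mem_univ s)⟩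
  -- the auxiliary sequences
  set F : (S → A → ℝ) → ℕ → ℝ := fun π t => γ ^ t * ∑ s, d π t s * V s with hF
  set c : ℕ → ℝ :=
    fun t => γ ^ t * ∑ s, (d π₁ t s - d π₂ t s) * ∑ a, π₂ s a * (Q s a - V s) with hc
  have hgeo : Summable fun t : ℕ => γ ^ t := summable_geometric_of_lt_one hγ0 hγ1
  have habs_geo : ∀ (u : ℕ → ℝ) (C : ℝ), (∀ t, |u t| ≤ C) →
      Summable (fun t => γ ^ t * u t) := by
    intro u C hu
    refine Summable.of_norm_bounded (hgeo.mul_left C) fun t => ?_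
    rw [Real.norm_eq_abs, abs_mul, abs_of_nonneg (pow_nonneg hγ0 t), mul_comm]
    exact mul_le_mul_of_nonneg_right (hu t) (pow_nonneg hγ0 t)
  have hRrw : ∀ (π : S → A → ℝ) (t : ℕ), (∑ s, ∑ a, d π t s * π s a * r s a)
      = ∑ s, d π t s * ∑ a, π s a * r s a := by
    intro π t
    refine Finset.sum_congr rfl fun s _ => ?_
    rw [Finset.mul_sum]
    exact Finset.sum_congr rfl fun a _ => by ring
  have hsumR : ∀ (π : S → A → ℝ), (∀ s, (∀ a, 0 ≤ π s a) ∧ ∑ a, π s a = 1) →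
      Summable (fun t => γ ^ t * ∑ s, ∑ a, d π t s * π s a * r s a) := by
    intro π hπ
    refine habs_geo _ Cr fun t => ?_
    rw [hRrw]
    exact wsum_abs_le _ _ _ (hd' π hπ t).1 (hd' π hπ t).2 fun s =>
      wsum_abs_le _ _ _ (hπ s).1 (hπ s).2 fun a => hCr s a
  have hsumF : ∀ (π : S → A → ℝ), (∀ s, (∀ a, 0 ≤ π s a) ∧ ∑ a, π s a = 1) →
      Summable (F π) := by
    intro π hπ
    exact habs_geo _ CV fun t =>
      wsum_abs_le _ _ _ (hd' π hπ t).1 (hd' π hπ t).2 hCV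
  have hsumΔA : Summable (fun t => γ ^ t * ∑ s, d π₁ t s *
      (∑ a, (π₁ s a - π₂ s a) * (Q s a - V s))) := by
    refine habs_geo _ (2 * ε) fun t => ?_
    refine wsum_abs_le _ _ _ (hd' π₁ hπ₁ t).1 (hd' π₁ hπ₁ t).2 fun s => ?_
    rw [hsplit]
    calc |(∑ a, π₁ s a * (Q s a - V s)) - ∑ a, π₂ s a * (Q s a - V s)|
        ≤ |∑ a, π₁ s a * (Q s a - V s)| + |∑ a, π₂ s a * (Q s a - V s)| := abs_sub _ _
      _ ≤ 2 * ε := by have := hh1ε s; have := hh2ε s; linarith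
  have hcbound : ∀ t : ℕ, |c t| ≤ 2 * α * ε * ((t : ℝ) * γ ^ t) := by
    intro t
    rw [hc]
    simp only
    rw [abs_mul, abs_of_nonneg (pow_nonneg hγ0 t)]
    have hb : |∑ s, (d π₁ t s - d π₂ t s) * ∑ a, π₂ s a * (Q s a - V s)| ≤ 2 * t * α * ε := by
      refine (Finset.abs_sum_le_sum_abs _ _).trans ?_
      calc ∑ s, |(d π₁ t s - d π₂ t s) * ∑ a, π₂ s a * (Q s a - V s)|
          ≤ ∑ s, |d π₁ t s - d π₂ t s| * ε := by
            refine Finset.sum_le_sum fun s _ => ?_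
            rw [abs_mul]
            exact mul_le_mul_of_nonneg_left (hh2ε s) (abs_nonneg _)
        _ = (∑ s, |d π₁ t s - d π₂ t s|) * ε := by rw [Finset.sum_mul]
        _ ≤ 2 * t * α * ε := mul_le_mul_of_nonneg_right (hΔ t) hε0
    calc γ ^ t * |∑ s, (d π₁ t s - d π₂ t s) * ∑ a, π₂ s a * (Q s a - V s)|
        ≤ γ ^ t * (2 * t * α * ε) :=
          mul_le_mul_of_nonneg_left hb (pow_nonneg hγ0 t)
      _ = 2 * α * ε * ((t : ℝ) * γ ^ t) := by ring
  have hγn : ‖γ‖ < 1 := by rwa [Real.norm_eq_abs, abs_of_nonneg hγ0]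
  have hsumtg : Summable (fun t : ℕ => (t : ℝ) * γ ^ t) := by
    simpa using summable_pow_mul_geometric_of_norm_lt_one 1 hγn
  have hsumc : Summable c :=
    Summable.of_norm_bounded (g := fun t => 2 * α * ε * ((t : ℝ) * γ ^ t))
      (hsumtg.mul_left _) fun t => by rw [Real.norm_eq_abs]; exact hcbound t
  -- the per-step identity
  have step1 : ∀ (π : S → A → ℝ), (∀ s, (∀ a, 0 ≤ π s a) ∧ ∑ a, π s a = 1) → ∀ t : ℕ,
      γ ^ t * (∑ s, ∑ a, d π t s * π s a * r s a)
        = γ ^ t * (∑ s, d π t s * ∑ a, π s a * (Q s a - V s)) + (F π t - F π (t + 1)) := by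
    intro π hπ t
    have hA : ∑ s', d π (t+1) s' * V s'
        = ∑ s, ∑ a, d π t s * π s a * (∑ s', Ptr s a s' * V s') := by
      calc ∑ s', d π (t+1) s' * V s'
          = ∑ s', ∑ s, ∑ a, d π t s * π s a * Ptr s a s' * V s' := by
            refine Finset.sum_congr rfl fun s' _ => ?_
            rw [hdsucc, Finset.sum_mul]
            exact Finset.sum_congr rfl fun s _ => by rw [Finset.sum_mul]
        _ = ∑ s, ∑ s', ∑ a, d π t s * π s a * Ptr s a s' * V s' := Finset.sum_comm
        _ = ∑ s, ∑ a, ∑ s', d π t s * π s a * Ptr s a s' * V s' :=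
            Finset.sum_congr rfl fun s _ => Finset.sum_comm
        _ = ∑ s, ∑ a, d π t s * π s a * (∑ s', Ptr s a s' * V s') := by
            refine Finset.sum_congr rfl fun s _ => Finset.sum_congr rfl fun a _ => ?_
            rw [Finset.mul_sum]
            exact Finset.sum_congr rfl fun s' _ => by ring
    have hB : (∑ s, ∑ a, d π t s * π s a * r s a)
        = (∑ s, ∑ a, d π t s * π s a * Q s a)
          - γ * ∑ s, ∑ a, d π t s * π s a * (∑ s', Ptr s a s' * V s') := by
      rw [Finset.mul_sum, ← Finset.sum_sub_distrib]
      refine Finset.sum_congr rfl fun s _ => ?_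
      rw [Finset.mul_sum, ← Finset.sum_sub_distrib]
      refine Finset.sum_congr rfl fun a _ => ?_
      rw [hQ s a]; ring
    have hC : (∑ s, d π t s * ∑ a, π s a * (Q s a - V s))
        = (∑ s, ∑ a, d π t s * π s a * Q s a) - ∑ s, d π t s * V s := by
      rw [← Finset.sum_sub_distrib]
      refine Finset.sum_congr rfl fun s _ => ?_
      have e1 : d π t s * V s = ∑ a, d π t s * π s a * V s := by
        rw [show (∑ a, d π t s * π s a * V s) = (∑ a, π s a) * (d π t s * V s) by
          rw [Finset.sum_mul]; exact Finset.sum_congr rfl fun a _ => by ring]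
        rw [(hπ s).2, one_mul]
      rw [e1, Finset.mul_sum, ← Finset.sum_sub_distrib]
      exact Finset.sum_congr rfl fun a _ => by ring
    rw [hB, hC, hF]
    simp only
    rw [hA]
    ring
  -- combining everything: the LHS equals ∑' c
  have keyt : ∀ t : ℕ,
      (γ ^ t * (∑ s, ∑ a, d π₁ t s * π₁ s a * r s a)
        - γ ^ t * (∑ s, ∑ a, d π₂ t s * π₂ s a * r s a))
        - γ ^ t * (∑ s, d π₁ t s * (∑ a, (π₁ s a - π₂ s a) * (Q s a - V s)))
      = c t + ((F π₁ t - F π₁ (t+1)) - (F π₂ t - F π₂ (t+1))) := by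
    intro t
    rw [step1 π₁ hπ₁ t, step1 π₂ hπ₂ t, hc]
    simp only
    have e0 : (∑ s, d π₁ t s * ∑ a, π₁ s a * (Q s a - V s))
        - (∑ s, d π₂ t s * ∑ a, π₂ s a * (Q s a - V s))
        - (∑ s, d π₁ t s * (∑ a, (π₁ s a - π₂ s a) * (Q s a - V s)))
        = ∑ s, (d π₁ t s - d π₂ t s) * ∑ a, π₂ s a * (Q s a - V s) := by
      rw [← Finset.sum_sub_distrib, ← Finset.sum_sub_distrib]
      refine Finset.sum_congr rfl fun s _ => ?_
      rw [hsplit s]; ring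
    calc (γ ^ t * (∑ s, d π₁ t s * ∑ a, π₁ s a * (Q s a - V s)) + (F π₁ t - F π₁ (t + 1))
          - (γ ^ t * (∑ s, d π₂ t s * ∑ a, π₂ s a * (Q s a - V s)) + (F π₂ t - F π₂ (t + 1))))
          - γ ^ t * (∑ s, d π₁ t s * (∑ a, (π₁ s a - π₂ s a) * (Q s a - V s)))
        = γ ^ t * ((∑ s, d π₁ t s * ∑ a, π₁ s a * (Q s a - V s))
            - (∑ s, d π₂ t s * ∑ a, π₂ s a * (Q s a - V s))
            - (∑ s, d π₁ t s * (∑ a, (π₁ s a - π₂ s a) * (Q s a - V s))))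
            + ((F π₁ t - F π₁ (t+1)) - (F π₂ t - F π₂ (t+1))) := by ring
      _ = γ ^ t * (∑ s, (d π₁ t s - d π₂ t s) * ∑ a, π₂ s a * (Q s a - V s))
            + ((F π₁ t - F π₁ (t+1)) - (F π₂ t - F π₂ (t+1))) := by rw [e0]
  have hsumF1 : Summable (F π₁) := hsumF π₁ hπ₁
  have hsumF2 : Summable (F π₂) := hsumF π₂ hπ₂
  have hsumF1' : Summable (fun t => F π₁ (t + 1)) := (summable_nat_add_iff 1).2 hsumF1
  have hsumF2' : Summable (fun t => F π₂ (t + 1)) := (summable_nat_add_iff 1).2 hsumF2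
  have hsumtel : Summable (fun t => (F π₁ t - F π₁ (t+1)) - (F π₂ t - F π₂ (t+1))) :=
    (hsumF1.sub hsumF1').sub (hsumF2.sub hsumF2')
  have hF0 : F π₁ 0 = F π₂ 0 := by rw [hF]; simp [hdzero]
  have main : ((∑' t : ℕ, γ ^ t * ∑ s, ∑ a, d π₁ t s * π₁ s a * r s a)
        - (∑' t : ℕ, γ ^ t * ∑ s, ∑ a, d π₂ t s * π₂ s a * r s a))
      - (∑' t : ℕ, γ ^ t * ∑ s, d π₁ t s *
          (∑ a, (π₁ s a - π₂ s a) * (Q s a - V s)))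
      = ∑' t : ℕ, c t := by
    rw [← Summable.tsum_sub (hsumR π₁ hπ₁) (hsumR π₂ hπ₂),
      ← Summable.tsum_sub ((hsumR π₁ hπ₁).sub (hsumR π₂ hπ₂)) hsumΔA]
    rw [tsum_congr keyt, Summable.tsum_add hsumc hsumtel,
      Summable.tsum_sub (hsumF1.sub hsumF1') (hsumF2.sub hsumF2'),
      tsum_telescope_eq _ hsumF1, tsum_telescope_eq _ hsumF2, hF0]
    ring
  rw [main]
  have hs : HasSum (fun t : ℕ => 2 * α * ε * ((t : ℝ) * γ ^ t))
      (2 * α * ε * (γ / (1 - γ) ^ 2)) :=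
    (hasSum_coe_mul_geometric_of_norm_lt_one hγn).mul_left _
  have hb := tsum_of_norm_bounded hs fun t => by
    rw [Real.norm_eq_abs]; exact hcbound t
  rw [Real.norm_eq_abs] at hb
  calc |∑' t : ℕ, c t| ≤ 2 * α * ε * (γ / (1 - γ) ^ 2) := hb
    _ = 2 * α * γ * ε / (1 - γ) ^ 2 := by ring
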